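/- arXiv:1003.1844 — 2 statements merged into one kernel-verified Lean document; each statement's English description precedes it below -/
import Mathlib

section
/- Let R be a field, Γ a group with Hom(Γ,R) = 0 (no nontrivial group homomorphisms from Γ to the additive group of R), and V an R[Γ]-module. Then for every q ≥ 0, the higher order invariants H⁰_q(Γ,V) = {v : I^{q+1}v = 0} coincide with the ordinary invariants V^Γ. -/
open MonoidAlgebra

/-- The augmentation ideal of `R[Γ]`, as an `R`-submodule. -/
noncomputable def augIdeal (R Γ : Type*) [CommRing R] [Group Γ] :
    Submodule R (MonoidAlgebra R Γ) :=
  (RingHom.ker ((MonoidAlgebra.lift R R Γ) 1).toRingHom).restrictScalars R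

/-- The invariants of order `q`: `H⁰_q(Γ,V) = {v ∈ V : I^{q+1} v = 0}`. -/
noncomputable def ordInv (R Γ : Type*) [CommRing R] [Group Γ]
    (V : Type*) [AddCommGroup V] [Module (MonoidAlgebra R Γ) V]
    [Module R V] [SMulCommClass (MonoidAlgebra R Γ) R V] (q : ℕ) :
    Submodule R V where
  carrier := {v | ∀ x ∈ (augIdeal R Γ) ^ (q + 1), x • v = 0}
  add_mem' := fun {a b} ha hb x hx => by rw [smul_add, ha x hx, hb x hx, add_zero]
  zero_mem' := fun x _ => smul_zero x
  smul_mem' := fun r v hv x hx => by rw [smul_comm, hv x hx, smul_zero]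

section Aux

variable (R Γ : Type*) [CommRing R] [Group Γ]

/-- The augmentation map. -/
noncomputable def augMap : MonoidAlgebra R Γ →ₐ[R] R :=
  (MonoidAlgebra.lift R R Γ) 1

lemma mem_augIdeal_iff (x : MonoidAlgebra R Γ) :
    x ∈ augIdeal R Γ ↔ augMap R Γ x = 0 := by
  simp [augIdeal, augMap, RingHom.mem_ker]

lemma augMap_of (γ : Γ) : augMap R Γ (MonoidAlgebra.of R Γ γ) = 1 := by
  rw [augMap, MonoidAlgebra.lift_of]; rfl

lemma sub_one_mem_augIdeal (γ : Γ) : MonoidAlgebra.of R Γ γ - 1 ∈ augIdeal R Γ := by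
  rw [mem_augIdeal_iff, map_sub, map_one, augMap_of, sub_self]

lemma augIdeal_eq_span :
    augIdeal R Γ = Submodule.span R {x | ∃ γ : Γ, MonoidAlgebra.of R Γ γ - 1 = x} := by
  apply le_antisymm
  · intro x hx
    rw [mem_augIdeal_iff] at hx
    have key : ∀ y : MonoidAlgebra R Γ,
        y - (augMap R Γ y) • (1 : MonoidAlgebra R Γ) ∈
          Submodule.span R {x | ∃ γ : Γ, MonoidAlgebra.of R Γ γ - 1 = x} := by
      intro y
      refine MonoidAlgebra.induction_on (motive := fun y => y - (augMap R Γ y) • (1 : MonoidAlgebra R Γ) ∈ Submodule.span R {x | ∃ γ : Γ, MonoidAlgebra.of R Γ γ - 1 = x}) y ?_ ?_ ?_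
      · intro γ
        rw [augMap_of, one_smul]
        exact Submodule.subset_span ⟨γ, rfl⟩
      · intro f g hf hg
        have : f + g - (augMap R Γ (f + g)) • (1 : MonoidAlgebra R Γ)
            = (f - (augMap R Γ f) • 1) + (g - (augMap R Γ g) • 1) := by
          rw [map_add, add_smul]; abel
        rw [this]; exact Submodule.add_mem _ hf hg
      · intro r f hf
        have : r • f - (augMap R Γ (r • f)) • (1 : MonoidAlgebra R Γ)
            = r • (f - (augMap R Γ f) • 1) := by
          rw [map_smul, smul_sub, smul_smul, smul_eq_mul]
        rw [this]
        exact Submodule.smul_mem _ _ hf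
    have := key x
    rwa [hx, zero_smul, sub_zero] at this
  · rw [Submodule.span_le]
    rintro x ⟨γ, rfl⟩
    exact sub_one_mem_augIdeal R Γ γ

lemma augIdeal_sq_le : (augIdeal R Γ) ^ 2 ≤ augIdeal R Γ := by
  rw [pow_two]
  apply Submodule.mul_le.2
  intro m hm n hn
  rw [mem_augIdeal_iff] at *
  rw [map_mul, hm, zero_mul]

end Aux

section Field

variable (R Γ : Type*) [Field R] [Group Γ]

set_option synthInstance.maxHeartbeats 1000000 in
lemma augIdeal_eq_sq (hHom : ∀ f : Additive Γ →+ R, f = 0) :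
    (augIdeal R Γ) ^ 2 = augIdeal R Γ := by
  refine le_antisymm (augIdeal_sq_le R Γ) ?_
  by_contra hlt
  -- get a generator not in I^2
  have hgen : ¬ ∀ γ : Γ, MonoidAlgebra.of R Γ γ - 1 ∈ (augIdeal R Γ) ^ 2 := by
    intro h
    apply hlt
    conv_lhs => rw [augIdeal_eq_span]
    rw [Submodule.span_le]
    rintro x ⟨γ, rfl⟩
    exact h γ
  push_neg at hgen
  obtain ⟨γ₀, hγ₀⟩ := hgen
  set I := augIdeal R Γ with hI
  set J : Submodule R I := Submodule.comap I.subtype (I ^ 2) with hJ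
  set e : I := ⟨MonoidAlgebra.of R Γ γ₀ - 1, sub_one_mem_augIdeal R Γ γ₀⟩ with he
  have hme : J.mkQ e ≠ 0 := by
    simp only [ne_eq, Submodule.mkQ_apply, Submodule.Quotient.mk_eq_zero]
    exact hγ₀
  have : ¬ ∀ φ : Module.Dual R (I ⧸ J), φ (J.mkQ e) = 0 := by
    rw [Module.forall_dual_apply_eq_zero_iff]; exact hme
  push_neg at this
  obtain ⟨φ, hφ⟩ := this
  set ψ : I →ₗ[R] R := φ.comp J.mkQ with hψ
  have ψ0 : ∀ x : I, (x : MonoidAlgebra R Γ) ∈ I ^ 2 → ψ x = 0 := by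
    intro x hx
    have : J.mkQ x = 0 := by
      rw [Submodule.mkQ_apply, Submodule.Quotient.mk_eq_zero]; exact hx
    simp [hψ, this]
  set F : Additive Γ →+ R :=
    { toFun := fun γ => ψ ⟨MonoidAlgebra.of R Γ γ.toMul - 1,
        sub_one_mem_augIdeal R Γ γ.toMul⟩
      map_zero' := by
        show ψ ⟨MonoidAlgebra.of R Γ ((0 : Additive Γ).toMul) - 1, _⟩ = 0
        have h1 : (⟨MonoidAlgebra.of R Γ ((0 : Additive Γ).toMul) - 1,
            sub_one_mem_augIdeal R Γ _⟩ : I) = 0 := by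
          apply Subtype.ext
          show MonoidAlgebra.of R Γ (1 : Γ) - 1 = 0
          rw [map_one, sub_self]
        rw [h1, map_zero]
      map_add' := by
        intro a b
        show ψ ⟨MonoidAlgebra.of R Γ ((a + b).toMul) - 1, _⟩
            = ψ ⟨MonoidAlgebra.of R Γ a.toMul - 1, _⟩ + ψ ⟨MonoidAlgebra.of R Γ b.toMul - 1, _⟩
        rw [← map_add, ← sub_eq_zero, ← map_sub]
        apply ψ0
        have hval : ((⟨MonoidAlgebra.of R Γ ((a + b).toMul) - 1, sub_one_mem_augIdeal R Γ _⟩ : I)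
            - (⟨MonoidAlgebra.of R Γ a.toMul - 1, sub_one_mem_augIdeal R Γ _⟩
              + ⟨MonoidAlgebra.of R Γ b.toMul - 1, sub_one_mem_augIdeal R Γ _⟩) : I).val
            = (MonoidAlgebra.of R Γ a.toMul - 1) * (MonoidAlgebra.of R Γ b.toMul - 1) := by
          have h2 : MonoidAlgebra.of R Γ ((a + b).toMul)
              = MonoidAlgebra.of R Γ a.toMul * MonoidAlgebra.of R Γ b.toMul := by
            rw [← map_mul]; rfl
          simp only [Submodule.coe_sub, Submodule.coe_add]
          rw [h2]
          noncomm_ring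
        rw [hval, pow_two]
        exact Submodule.mul_mem_mul (sub_one_mem_augIdeal R Γ _) (sub_one_mem_augIdeal R Γ _) }
      with hF
  have hF0 := hHom F
  have h3 : F (Additive.ofMul γ₀) = 0 := by rw [hF0]; simp
  have h4 : ψ e = 0 := h3
  exact hφ h4

lemma augIdeal_pow (hHom : ∀ f : Additive Γ →+ R, f = 0) (n : ℕ) :
    (augIdeal R Γ) ^ (n + 1) = augIdeal R Γ := by
  induction n with
  | zero => exact pow_one _
  | succ n ih =>
    rw [pow_succ, ih, ← pow_two]
    exact augIdeal_eq_sq R Γ hHom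

end Field

/-- If `R` is a field and there are no nontrivial group
homomorphisms `Γ → (R,+)`, then for every `q ≥ 0` the higher order invariants
`H⁰_q(Γ,V) = {v : I^{q+1} v = 0}` coincide with the ordinary invariants
`V^Γ = {v : γ v = v for all γ}`. -/
theorem stmt4 (R Γ : Type*) [Field R] [Group Γ]
    (hHom : ∀ f : Additive Γ →+ R, f = 0)
    (V : Type*) [AddCommGroup V] [Module (MonoidAlgebra R Γ) V]
    [Module R V] [SMulCommClass (MonoidAlgebra R Γ) R V]
    (q : ℕ) :
    (ordInv R Γ V q : Set V) = {v : V | ∀ γ : Γ, MonoidAlgebra.of R Γ γ • v = v} := by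
  ext v
  have hmem : v ∈ ordInv R Γ V q ↔ ∀ x ∈ (augIdeal R Γ) ^ (q + 1), x • v = 0 := Iff.rfl
  simp only [SetLike.mem_coe, Set.mem_setOf_eq]
  rw [hmem, augIdeal_pow R Γ hHom q]
  constructor
  · intro h γ
    have := h _ (sub_one_mem_augIdeal R Γ γ)
    rw [sub_smul, one_smul, sub_eq_zero] at this
    exact this
  · intro h x hx
    rw [augIdeal_eq_span] at hx
    induction hx using Submodule.span_induction with
    | mem y hy =>
      obtain ⟨γ, rfl⟩ := hy
      rw [sub_smul, one_smul, h γ, sub_self]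
    | zero => exact zero_smul _ v
    | add y z _ _ hy hz => rw [add_smul, hy, hz, add_zero]
    | smul r y _ hy =>
      rw [Algebra.smul_def, mul_smul, hy, smul_zero]
end

section
/- Let G be a locally compact group and Γ a countable discrete subgroup admitting a measurable fundamental set. Then Γ\G is compact if and only if there exists a relatively compact measurable fundamental set F ⊆ G (i.e., one with compact closure). -/
/-- `F` is a fundamental set for the left translation action of `Γ` on `G`:
a measurable set containing exactly one point of every orbit `Γx`. -/
def IsFundamentalSet {G : Type*} [Group G] [MeasurableSpace G]
    (Γ : Subgroup G) (F : Set G) : Prop :=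
  MeasurableSet F ∧ ∀ x : G, ∃! y : G, y ∈ F ∧ ∃ γ ∈ Γ, y = γ * x

/-- Any measurable set containing at least one representative of every orbit
contains a measurable fundamental set, provided some fundamental set exists. -/
theorem aux_fund_sub {G : Type*} [Group G] [MeasurableSpace G] [MeasurableMul G]
    (Γ : Subgroup G) [Countable Γ] (F₀ K : Set G) (h₀ : IsFundamentalSet Γ F₀)
    (hK : MeasurableSet K) (hKrep : ∀ x : G, ∃ γ ∈ Γ, γ * x ∈ K) :
    ∃ F : Set G, IsFundamentalSet Γ F ∧ F ⊆ K := by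
  obtain ⟨e, he⟩ := exists_surjective_nat Γ
  set A : ℕ → Set G := fun n =>
    K ∩ ((fun x => ((e n : G))⁻¹ * x) ⁻¹' F₀) ∩
      ⋂ m, ⋂ _ : m < n, ((fun x => (e m : G) * ((e n : G)⁻¹ * x)) ⁻¹' K)ᶜ with hA
  refine ⟨⋃ n, A n, ⟨?_, ?_⟩, ?_⟩
  · refine MeasurableSet.iUnion fun n => ?_
    refine ((hK.inter (h₀.1.preimage (measurable_const_mul _))).inter ?_)
    exact MeasurableSet.iInter fun m => MeasurableSet.iInter fun _ =>
      (hK.preimage ((measurable_const_mul _).comp (measurable_const_mul _))).compl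
  · intro x
    obtain ⟨f₀, ⟨hf₀F, γ₀, hγ₀, hf₀x⟩, huniq⟩ := h₀.2 x
    have hS : ∃ n, (e n : G) * f₀ ∈ K := by
      obtain ⟨γ, hγ, hγK⟩ := hKrep f₀
      obtain ⟨n, hn⟩ := he ⟨γ, hγ⟩
      exact ⟨n, by rw [hn]; exact hγK⟩
    classical
    set n := Nat.find hS with hn
    have hnK : (e n : G) * f₀ ∈ K := Nat.find_spec hS
    refine ⟨(e n : G) * f₀, ⟨?_, ⟨(e n : G) * γ₀, mul_mem (e n).2 hγ₀, by
      rw [hf₀x, mul_assoc]⟩⟩, ?_⟩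
    · refine Set.mem_iUnion.2 ⟨n, ⟨hnK, by simp [hf₀F]⟩, ?_⟩
      simp only [Set.mem_iInter]
      intro m hm
      simp only [Set.mem_compl_iff, Set.mem_preimage, inv_mul_cancel_left]
      exact Nat.find_min hS hm
    · rintro y' ⟨hy'F, γ', hγ', rfl⟩
      obtain ⟨n', hn'⟩ := Set.mem_iUnion.1 hy'F
      obtain ⟨⟨hy'K, hy'F₀⟩, hy'min⟩ := hn'
      have hf' : (e n' : G)⁻¹ * (γ' * x) = f₀ := by
        exact huniq _ ⟨hy'F₀, ((e n' : G))⁻¹ * γ', mul_mem (inv_mem (e n').2) hγ', by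
          rw [mul_assoc]⟩
      have hy'eq : γ' * x = (e n' : G) * f₀ := by
        rw [← hf', mul_inv_cancel_left]
      have hn'K : (e n' : G) * f₀ ∈ K := hy'eq ▸ hy'K
      have hle : n ≤ n' := Nat.find_le hn'K
      have hge : ¬ n < n' := by
        intro hlt
        have := Set.mem_iInter.1 (Set.mem_iInter.1 hy'min n) hlt
        simp only [Set.mem_compl_iff, Set.mem_preimage] at this
        rw [hy'eq, inv_mul_cancel_left] at this
        exact this hnK
      have : n' = n := le_antisymm (not_lt.1 hge) hle
      rw [hy'eq, this]
  · exact Set.iUnion_subset fun n => fun x hx => hx.1.1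

/-- Let `G` be a locally compact (Hausdorff) topological group
with its Borel σ-algebra and `Γ` a countable discrete subgroup admitting a
measurable fundamental set.  Then the quotient `Γ\G` (the space of orbits of the
left translation action, with the quotient topology) is compact if and only if
there exists a relatively compact measurable fundamental set `F ⊆ G`. -/
theorem stmt18 (G : Type*) [Group G] [TopologicalSpace G] [IsTopologicalGroup G]
    [T2Space G] [LocallyCompactSpace G] [MeasurableSpace G] [BorelSpace G]
    (Γ : Subgroup G) [Countable Γ] [DiscreteTopology Γ]
    (hex : ∃ F₀ : Set G, IsFundamentalSet Γ F₀) :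
    CompactSpace (Quotient (QuotientGroup.rightRel Γ)) ↔
      ∃ F : Set G, IsFundamentalSet Γ F ∧ IsCompact (closure F) := by
  obtain ⟨F₀, hF₀⟩ := hex
  set π : G → Quotient (QuotientGroup.rightRel Γ) := Quotient.mk _ with hπ
  have hπcont : Continuous π := continuous_quotient_mk'
  have hπeq : ∀ x y : G, π x = π y ↔ y * x⁻¹ ∈ Γ := by
    intro x y
    rw [hπ, Quotient.eq]
    exact QuotientGroup.rightRel_apply
  constructor
  · intro hcomp
    -- π is an open map
    have hopen : IsOpenMap π := by
      intro U hU
      rw [hπ, isOpen_coinduced]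
      show IsOpen (π ⁻¹' (π '' U))
      have : π ⁻¹' (π '' U)
          = ⋃ γ : Γ, (fun x => (γ : G) * x) '' U := by
        ext x
        simp only [Set.mem_preimage, Set.mem_image, Set.mem_iUnion]
        constructor
        · rintro ⟨u, hu, huv⟩
          have hγ : x * u⁻¹ ∈ Γ := (hπeq u x).1 huv
          exact ⟨⟨x * u⁻¹, hγ⟩, u, hu, by simp⟩
        · rintro ⟨γ, u, hu, rfl⟩
          refine ⟨u, hu, (hπeq u ((γ : G) * u)).2 ?_⟩
          simp
      rw [this]
      exact isOpen_iUnion fun γ => (Homeomorph.mulLeft (γ : G)).isOpenMap U hU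
    -- cover the quotient by images of interiors of compact sets
    have hcover : ∀ q : Quotient (QuotientGroup.rightRel Γ),
        ∃ C : Set G, IsCompact C ∧ q ∈ π '' interior C := by
      intro q
      obtain ⟨C, hC, hCmem⟩ := exists_compact_mem_nhds q.out
      exact ⟨C, hC, ⟨q.out, mem_interior_iff_mem_nhds.2 hCmem, q.out_eq⟩⟩
    choose C hCcomp hCmem using hcover
    obtain ⟨t, ht⟩ := isCompact_univ.elim_finite_subcover
      (fun q => π '' interior (C q))
      (fun q => hopen _ isOpen_interior)
      (fun q _ => Set.mem_iUnion.2 ⟨q, hCmem q⟩)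
    set K : Set G := ⋃ q ∈ t, C q with hKdef
    have hKcomp : IsCompact K := t.isCompact_biUnion fun q _ => hCcomp q
    have hKrep : ∀ x : G, ∃ γ ∈ Γ, γ * x ∈ K := by
      intro x
      obtain ⟨q, hqt, hq⟩ := Set.mem_iUnion₂.1 (ht (Set.mem_univ (π x)))
      obtain ⟨u, hu, huπ⟩ := hq
      have hγ : u * x⁻¹ ∈ Γ := (hπeq x u).1 huπ.symm
      refine ⟨u * x⁻¹, hγ, ?_⟩
      have : u * x⁻¹ * x = u := by group
      rw [this]
      exact Set.mem_biUnion hqt (interior_subset hu)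
    obtain ⟨F, hF, hFK⟩ := aux_fund_sub Γ F₀ K hF₀
      hKcomp.isClosed.measurableSet hKrep
    refine ⟨F, hF, ?_⟩
    exact hKcomp.of_isClosed_subset isClosed_closure
      (closure_minimal hFK hKcomp.isClosed)
  · rintro ⟨F, hF, hcl⟩
    refine ⟨?_⟩
    have hsurj : Set.univ ⊆ π '' closure F := by
      rintro q -
      obtain ⟨y, ⟨hyF, γ, hγ, hy⟩, -⟩ := hF.2 q.out
      refine ⟨y, subset_closure hyF, ?_⟩
      rw [show π y = q from ?_]
      rw [← q.out_eq, hπeq]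
      rw [hy]
      simpa using inv_mem hγ
    have : Set.univ = π '' closure F :=
      le_antisymm hsurj (Set.subset_univ _)
    rw [this]
    exact hcl.image hπcont
end
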